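/- Let z = (z₁, z₂, z₃) have i.i.d. standard normal coordinates and let f(z) = z₁ + z₁z₂ + z₁z₂z₃. Then E[f(z) · z₁] = 1, E[(f(z))² · z₂] = 2, and E[(f(z))² · z₃] = 2. In particular, for each i ∈ {1,2,3} there is a polynomial F : ℝ → ℝ with E[F(f(z)) · z_i] ≠ 0. -/

import Mathlib

open MeasureTheory ProbabilityTheory

open Real in
private lemma gauss_pdf_eq (x : ℝ) : gaussianPDFReal 0 1 x
    = (Real.sqrt (2*π))⁻¹ * Real.exp (-(1/2) * x^2) := by
  simp only [gaussianPDFReal, NNReal.coe_one, mul_one, sub_zero]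
  congr 1
  ring_nf

private lemma integral_gaussianReal_eq (g : ℝ → ℝ) :
    ∫ x, g x ∂(gaussianReal 0 1) = ∫ x, gaussianPDFReal 0 1 x * g x := by
  rw [gaussianReal_of_var_ne_zero 0 one_ne_zero]
  have h : gaussianPDF 0 1
      = fun x => ((Real.toNNReal (gaussianPDFReal 0 1 x) : NNReal) : ENNReal) := rfl
  rw [h, integral_withDensity_eq_integral_smul ((measurable_gaussianPDFReal 0 1).real_toNNReal) g]
  congr 1; funext x
  rw [NNReal.smul_def, Real.coe_toNNReal _ (gaussianPDFReal_nonneg 0 1 x), smul_eq_mul]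

private lemma integrable_gaussianReal_iff (g : ℝ → ℝ) :
    Integrable g (gaussianReal 0 1) ↔ Integrable (fun x => gaussianPDFReal 0 1 x * g x) := by
  rw [gaussianReal_of_var_ne_zero 0 one_ne_zero]
  have h : gaussianPDF 0 1
      = fun x => ((Real.toNNReal (gaussianPDFReal 0 1 x) : NNReal) : ENNReal) := rfl
  rw [h, integrable_withDensity_iff_integrable_smul ((measurable_gaussianPDFReal 0 1).real_toNNReal)]
  constructor <;> intro h' <;>
    · convert h' using 2 with x
      · rfl
      · rw [NNReal.smul_def, Real.coe_toNNReal _ (gaussianPDFReal_nonneg 0 1 x), smul_eq_mul]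

private lemma integrable_pow_exp (n : ℕ) :
    Integrable (fun x : ℝ => x ^ n * Real.exp (-(1/2) * x ^ 2)) := by
  have h : (-1 : ℝ) < n := lt_of_lt_of_le (by norm_num) (Nat.cast_nonneg n)
  have := integrable_rpow_mul_exp_neg_mul_sq (b := (1:ℝ)/2) (by norm_num) h
  simpa [Real.rpow_natCast] using this

open Real in
private lemma integrable_pow_gaussian (n : ℕ) :
    Integrable (fun x : ℝ => x ^ n) (gaussianReal 0 1) := by
  rw [integrable_gaussianReal_iff]
  have h : (fun x : ℝ => gaussianPDFReal 0 1 x * x ^ n)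
      = fun x => (Real.sqrt (2*π))⁻¹ * (x ^ n * Real.exp (-(1/2) * x^2)) := by
    funext x; rw [gauss_pdf_eq]; ring
  rw [h]
  exact (integrable_pow_exp n).const_mul _

open Real in
private lemma integral_exp_half : ∫ x : ℝ, Real.exp (-(1/2) * x ^ 2) = Real.sqrt (2 * π) := by
  rw [integral_gaussian, show π / (1/2) = 2 * π by ring]

open Real in
private lemma integral_sq_exp :
    ∫ x : ℝ, x ^ 2 * Real.exp (-(1/2) * x ^ 2) = Real.sqrt (2 * π) := by
  have hu : ∀ x : ℝ, HasDerivAt (fun y : ℝ => y) (1:ℝ) x := fun x => hasDerivAt_id x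
  have hv : ∀ x : ℝ, HasDerivAt (fun y : ℝ => -Real.exp (-(1/2)*y^2))
      (x * Real.exp (-(1/2)*x^2)) x := by
    intro x
    have h1 : HasDerivAt (fun y : ℝ => -(1/2)*y^2) (-(1/2)*(2*x^1)) x :=
      (hasDerivAt_pow 2 x).const_mul (-(1/2):ℝ)
    have h2 : HasDerivAt (fun y : ℝ => -Real.exp (-(1/2)*y^2))
        (-(Real.exp (-(1/2)*x^2) * (-(1/2)*(2*x^1)))) x := (h1.exp).neg
    convert h2 using 1
    ring
  have hexp : Integrable (fun x : ℝ => Real.exp (-(1/2) * x^2)) :=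
    integrable_exp_neg_mul_sq (by norm_num : (0:ℝ) < 1/2)
  have huv' : Integrable ((fun y:ℝ => y) * fun y => y * Real.exp (-(1/2)*y^2)) := by
    have h := integrable_pow_exp 2
    convert h using 1; funext x; simp only [Pi.mul_apply]; ring
  have hu'v : Integrable ((fun _:ℝ => (1:ℝ)) * fun y => -Real.exp (-(1/2)*y^2)) := by
    have e : ((fun _:ℝ => (1:ℝ)) * fun y => -Real.exp (-(1/2)*y^2))
        = fun x : ℝ => -(Real.exp (-(1/2)*x^2)) := by
      funext x; simp only [Pi.mul_apply]; ring
    rw [e]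
    exact hexp.neg'
  have huv : Integrable ((fun y:ℝ => y) * fun y => -Real.exp (-(1/2)*y^2)) := by
    have e : ((fun y:ℝ => y) * fun y => -Real.exp (-(1/2)*y^2))
        = fun x : ℝ => -(x ^ 1 * Real.exp (-(1/2)*x^2)) := by
      funext x; simp only [Pi.mul_apply, pow_one]; ring
    rw [e]
    exact (integrable_pow_exp 1).neg'
  have key := integral_mul_deriv_eq_deriv_mul_of_integrable (fun x _ => hu x) (fun x _ => hv x) huv' hu'v huv
  have l1 : ∫ x : ℝ, x ^ 2 * Real.exp (-(1/2) * x ^ 2)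
      = ∫ x : ℝ, x * (x * Real.exp (-(1/2) * x ^ 2)) := by
    congr 1; funext x; ring
  have l2 : ∫ x : ℝ, (1:ℝ) * (-Real.exp (-(1/2) * x ^ 2))
      = - ∫ x : ℝ, Real.exp (-(1/2) * x ^ 2) := by
    rw [← integral_neg]; congr 1; funext x; ring
  rw [l1, key, l2, neg_neg, integral_exp_half]

private lemma gaussian_moment_zero : ∫ x, x ^ (0:ℕ) ∂(gaussianReal 0 1) = 1 := by
  simp

private lemma gaussian_moment_odd (n : ℕ) (hn : Odd n) :
    ∫ x, x ^ n ∂(gaussianReal 0 1) = 0 := by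
  rw [integral_gaussianReal_eq]
  have h := integral_neg_eq_self (fun x : ℝ => gaussianPDFReal 0 1 x * x ^ n) volume
  have h2 : (fun x : ℝ => gaussianPDFReal 0 1 (-x) * (-x) ^ n)
      = fun x : ℝ => -(gaussianPDFReal 0 1 x * x ^ n) := by
    funext x
    simp only [gauss_pdf_eq, neg_sq, hn.neg_pow]
    ring
  rw [h2, integral_neg] at h
  linarith

private lemma gaussian_moment_one : ∫ x, x ^ (1:ℕ) ∂(gaussianReal 0 1) = 0 :=
  gaussian_moment_odd 1 odd_one

private lemma gaussian_moment_three : ∫ x, x ^ (3:ℕ) ∂(gaussianReal 0 1) = 0 :=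
  gaussian_moment_odd 3 ⟨1, by norm_num⟩

open Real in
private lemma gaussian_moment_two : ∫ x, x ^ (2:ℕ) ∂(gaussianReal 0 1) = 1 := by
  rw [integral_gaussianReal_eq]
  have h : (fun x : ℝ => gaussianPDFReal 0 1 x * x ^ 2)
      = fun x => (Real.sqrt (2*π))⁻¹ * (x ^ 2 * Real.exp (-(1/2) * x^2)) := by
    funext x; rw [gauss_pdf_eq]; ring
  rw [h, integral_const_mul, integral_sq_exp, inv_mul_cancel₀]
  positivity

/-- The standard Gaussian measure on `ℝ³` (i.i.d. `N(0,1)` coordinates). -/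
noncomputable def stdGaussian3 : Measure (Fin 3 → ℝ) :=
  Measure.pi fun _ => gaussianReal 0 1

/-- The staircase target `f(z) = z₁ + z₁z₂ + z₁z₂z₃`. -/
def staircase (z : Fin 3 → ℝ) : ℝ := z 0 + z 0 * z 1 + z 0 * z 1 * z 2

private lemma integral_mono3 (a b c : ℕ) :
    ∫ z, (z 0) ^ a * (z 1) ^ b * (z 2) ^ c ∂stdGaussian3
      = (∫ x, x ^ a ∂(gaussianReal 0 1)) * (∫ x, x ^ b ∂(gaussianReal 0 1))
        * (∫ x, x ^ c ∂(gaussianReal 0 1)) := by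
  letI : MeasureSpace ℝ := ⟨gaussianReal 0 1⟩
  haveI : SigmaFinite (volume : Measure ℝ) :=
    (inferInstance : SigmaFinite (gaussianReal 0 1))
  have h := MeasureTheory.integral_fintype_prod_eq_prod (𝕜 := ℝ) (ι := Fin 3)
      (f := fun i (x : ℝ) => x ^ (![a, b, c] i)) (μ := fun _ => gaussianReal 0 1)
  simp only [Fin.prod_univ_three, Matrix.cons_val_zero, Matrix.cons_val_one, Matrix.head_cons,
    Matrix.cons_val_two, Matrix.tail_cons] at h
  exact h

private lemma integrable_mono3 (a b c : ℕ) :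
    Integrable (fun z => (z 0) ^ a * (z 1) ^ b * (z 2) ^ c) stdGaussian3 := by
  letI : MeasureSpace ℝ := ⟨gaussianReal 0 1⟩
  haveI : SigmaFinite (volume : Measure ℝ) :=
    (inferInstance : SigmaFinite (gaussianReal 0 1))
  have h := MeasureTheory.Integrable.fintype_prod (𝕜 := ℝ) (ι := Fin 3)
      (f := fun i (x : ℝ) => x ^ (![a, b, c] i)) (fun i => integrable_pow_gaussian _)
  simp only [Fin.prod_univ_three, Matrix.cons_val_zero, Matrix.cons_val_one, Matrix.head_cons,
    Matrix.cons_val_two, Matrix.tail_cons] at h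
  exact h

private lemma part1 : ∫ z, staircase z * z 0 ∂stdGaussian3 = 1 := by
  have e : (fun z : Fin 3 → ℝ => staircase z * z 0)
      = fun z => (z 0) ^ 2 * (z 1) ^ 0 * (z 2) ^ 0
          + ((z 0) ^ 2 * (z 1) ^ 1 * (z 2) ^ 0 + (z 0) ^ 2 * (z 1) ^ 1 * (z 2) ^ 1) := by
    funext z; simp only [staircase]; ring
  have I2 : Integrable (fun z : Fin 3 → ℝ =>
      (z 0) ^ 2 * (z 1) ^ 1 * (z 2) ^ 0 + (z 0) ^ 2 * (z 1) ^ 1 * (z 2) ^ 1) stdGaussian3 :=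
    (integrable_mono3 2 1 0).add (integrable_mono3 2 1 1)
  rw [e, integral_add (integrable_mono3 2 0 0) I2,
    integral_add (integrable_mono3 2 1 0) (integrable_mono3 2 1 1)]
  simp only [integral_mono3, gaussian_moment_zero, gaussian_moment_one, gaussian_moment_two]
  norm_num

private lemma part2 : ∫ z, (staircase z) ^ 2 * z 1 ∂stdGaussian3 = 2 := by
  have e : (fun z : Fin 3 → ℝ => (staircase z) ^ 2 * z 1)
      = fun z => (z 0) ^ 2 * (z 1) ^ 1 * (z 2) ^ 0
          + ((z 0) ^ 2 * (z 1) ^ 3 * (z 2) ^ 0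
          + ((z 0) ^ 2 * (z 1) ^ 3 * (z 2) ^ 2
          + (2 * ((z 0) ^ 2 * (z 1) ^ 2 * (z 2) ^ 0)
          + (2 * ((z 0) ^ 2 * (z 1) ^ 2 * (z 2) ^ 1)
          + 2 * ((z 0) ^ 2 * (z 1) ^ 3 * (z 2) ^ 1))))) := by
    funext z; simp only [staircase]; ring
  have i1 := integrable_mono3 2 1 0
  have i2 := integrable_mono3 2 3 0
  have i3 := integrable_mono3 2 3 2
  have i4 := (integrable_mono3 2 2 0).const_mul (2:ℝ)
  have i5 := (integrable_mono3 2 2 1).const_mul (2:ℝ)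
  have i6 := (integrable_mono3 2 3 1).const_mul (2:ℝ)
  have I5 : Integrable (fun z : Fin 3 → ℝ => 2 * ((z 0) ^ 2 * (z 1) ^ 2 * (z 2) ^ 1) + (2 * ((z 0) ^ 2 * (z 1) ^ 3 * (z 2) ^ 1))) stdGaussian3 :=
    i5.add i6
  have I4 : Integrable (fun z : Fin 3 → ℝ => 2 * ((z 0) ^ 2 * (z 1) ^ 2 * (z 2) ^ 0) + (2 * ((z 0) ^ 2 * (z 1) ^ 2 * (z 2) ^ 1) + (2 * ((z 0) ^ 2 * (z 1) ^ 3 * (z 2) ^ 1)))) stdGaussian3 :=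
    i4.add I5
  have I3 : Integrable (fun z : Fin 3 → ℝ => (z 0) ^ 2 * (z 1) ^ 3 * (z 2) ^ 2 + (2 * ((z 0) ^ 2 * (z 1) ^ 2 * (z 2) ^ 0) + (2 * ((z 0) ^ 2 * (z 1) ^ 2 * (z 2) ^ 1) + (2 * ((z 0) ^ 2 * (z 1) ^ 3 * (z 2) ^ 1))))) stdGaussian3 :=
    i3.add I4
  have I2 : Integrable (fun z : Fin 3 → ℝ => (z 0) ^ 2 * (z 1) ^ 3 * (z 2) ^ 0 + ((z 0) ^ 2 * (z 1) ^ 3 * (z 2) ^ 2 + (2 * ((z 0) ^ 2 * (z 1) ^ 2 * (z 2) ^ 0) + (2 * ((z 0) ^ 2 * (z 1) ^ 2 * (z 2) ^ 1) + (2 * ((z 0) ^ 2 * (z 1) ^ 3 * (z 2) ^ 1)))))) stdGaussian3 :=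
    i2.add I3
  rw [e, integral_add i1 I2,
    integral_add i2 I3,
    integral_add i3 I4,
    integral_add i4 I5,
    integral_add i5 i6]
  simp only [integral_const_mul, integral_mono3, gaussian_moment_zero, gaussian_moment_one,
    gaussian_moment_two, gaussian_moment_three]
  norm_num

private lemma part3 : ∫ z, (staircase z) ^ 2 * z 2 ∂stdGaussian3 = 2 := by
  have e : (fun z : Fin 3 → ℝ => (staircase z) ^ 2 * z 2)
      = fun z => (z 0) ^ 2 * (z 1) ^ 0 * (z 2) ^ 1
          + ((z 0) ^ 2 * (z 1) ^ 2 * (z 2) ^ 1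
          + ((z 0) ^ 2 * (z 1) ^ 2 * (z 2) ^ 3
          + (2 * ((z 0) ^ 2 * (z 1) ^ 1 * (z 2) ^ 1)
          + (2 * ((z 0) ^ 2 * (z 1) ^ 1 * (z 2) ^ 2)
          + 2 * ((z 0) ^ 2 * (z 1) ^ 2 * (z 2) ^ 2))))) := by
    funext z; simp only [staircase]; ring
  have i1 := integrable_mono3 2 0 1
  have i2 := integrable_mono3 2 2 1
  have i3 := integrable_mono3 2 2 3
  have i4 := (integrable_mono3 2 1 1).const_mul (2:ℝ)
  have i5 := (integrable_mono3 2 1 2).const_mul (2:ℝ)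
  have i6 := (integrable_mono3 2 2 2).const_mul (2:ℝ)
  have I5 : Integrable (fun z : Fin 3 → ℝ => 2 * ((z 0) ^ 2 * (z 1) ^ 1 * (z 2) ^ 2) + (2 * ((z 0) ^ 2 * (z 1) ^ 2 * (z 2) ^ 2))) stdGaussian3 :=
    i5.add i6
  have I4 : Integrable (fun z : Fin 3 → ℝ => 2 * ((z 0) ^ 2 * (z 1) ^ 1 * (z 2) ^ 1) + (2 * ((z 0) ^ 2 * (z 1) ^ 1 * (z 2) ^ 2) + (2 * ((z 0) ^ 2 * (z 1) ^ 2 * (z 2) ^ 2)))) stdGaussian3 :=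
    i4.add I5
  have I3 : Integrable (fun z : Fin 3 → ℝ => (z 0) ^ 2 * (z 1) ^ 2 * (z 2) ^ 3 + (2 * ((z 0) ^ 2 * (z 1) ^ 1 * (z 2) ^ 1) + (2 * ((z 0) ^ 2 * (z 1) ^ 1 * (z 2) ^ 2) + (2 * ((z 0) ^ 2 * (z 1) ^ 2 * (z 2) ^ 2))))) stdGaussian3 :=
    i3.add I4
  have I2 : Integrable (fun z : Fin 3 → ℝ => (z 0) ^ 2 * (z 1) ^ 2 * (z 2) ^ 1 + ((z 0) ^ 2 * (z 1) ^ 2 * (z 2) ^ 3 + (2 * ((z 0) ^ 2 * (z 1) ^ 1 * (z 2) ^ 1) + (2 * ((z 0) ^ 2 * (z 1) ^ 1 * (z 2) ^ 2) + (2 * ((z 0) ^ 2 * (z 1) ^ 2 * (z 2) ^ 2)))))) stdGaussian3 :=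
    i2.add I3
  rw [e, integral_add i1 I2,
    integral_add i2 I3,
    integral_add i3 I4,
    integral_add i4 I5,
    integral_add i5 i6]
  simp only [integral_const_mul, integral_mono3, gaussian_moment_zero, gaussian_moment_one,
    gaussian_moment_two, gaussian_moment_three]
  norm_num

/-- For the staircase target, every direction of the target subspace admits a polynomial
output transformation with nonzero linear correlation. -/
theorem staircase_all_directions_learnable :
    (∫ z, staircase z * z 0 ∂stdGaussian3 = 1) ∧
    (∫ z, (staircase z) ^ 2 * z 1 ∂stdGaussian3 = 2) ∧
    (∫ z, (staircase z) ^ 2 * z 2 ∂stdGaussian3 = 2) ∧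
    (∀ i : Fin 3, ∃ F : Polynomial ℝ,
      ∫ z, F.eval (staircase z) * z i ∂stdGaussian3 ≠ 0) := by
  refine ⟨part1, part2, part3, ?_⟩
  intro i
  fin_cases i
  · refine ⟨Polynomial.X, ?_⟩
    simp only [Polynomial.eval_X]
    rw [show ((⟨0, by norm_num⟩ : Fin 3)) = (0 : Fin 3) from rfl, part1]
    norm_num
  · refine ⟨Polynomial.X ^ 2, ?_⟩
    simp only [Polynomial.eval_pow, Polynomial.eval_X]
    rw [show ((⟨1, by norm_num⟩ : Fin 3)) = (1 : Fin 3) from rfl, part2]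
    norm_num
  · refine ⟨Polynomial.X ^ 2, ?_⟩
    simp only [Polynomial.eval_pow, Polynomial.eval_X]
    rw [show ((⟨2, by norm_num⟩ : Fin 3)) = (2 : Fin 3) from rfl, part3]
    norm_num
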